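/- Under the stated context, let L = ℚ(√−c, √C₁) viewed as a subfield of ℂ with ring of integers O_L, let q be an odd prime dividing C₁, and let 𝔮 be a nonzero prime ideal of O_L lying above q. Then αᵖ ≢ βᵖ (mod 𝔮). -/
import Mathlib


open Polynomial IntermediateField

noncomputable def sqrtneg (c : ℕ) : ℂ := Complex.I * Real.sqrt c

lemma sqrtneg_sq (c : ℕ) : sqrtneg c ^ 2 = -(c : ℂ) := by
  have h : ((Real.sqrt c : ℝ) : ℂ) ^ 2 = (c : ℂ) := by
    rw [← Complex.ofReal_pow, Real.sq_sqrt (by positivity)]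
    norm_num
  simp [sqrtneg, mul_pow, Complex.I_sq, h]

lemma sqrtneg_isIntegral (c : ℕ) : IsIntegral ℚ (sqrtneg c) := by
  refine ⟨X ^ 2 + C (c : ℚ), monic_X_pow_add_C _ two_ne_zero, ?_⟩
  simp [eval₂_add, eval₂_pow, sqrtneg_sq c]

/-- The field `K = ℚ(√-c)`, realised as the subfield of `ℂ` generated by `i·√c`. -/
noncomputable def Kf (c : ℕ) : IntermediateField ℚ ℂ := ℚ⟮sqrtneg c⟯

/-- The class number of `ℚ(√-c)`. -/
noncomputable def classNumberK (c : ℕ) : ℕ :=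
  haveI : FiniteDimensional ℚ (Kf c) :=
    IntermediateField.adjoin.finiteDimensional (sqrtneg_isIntegral c)
  haveI : NumberField (Kf c) := ⟨⟩
  NumberField.classNumber (Kf c)

/-- The field `L = ℚ(√-c, √C₁)`, realised as a subfield of `ℂ`. -/
noncomputable def Lf (c C₁ : ℕ) : IntermediateField ℚ ℂ :=
  IntermediateField.adjoin ℚ {sqrtneg c, (Real.sqrt C₁ : ℂ)}

set_option maxHeartbeats 1000000 in
theorem stmt11 (C₁ C₂ c d : ℕ) (hC₁pos : 0 < C₁) (hC₁sqf : Squarefree C₁)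
    (hC₂pos : 0 < C₂) (hcop : Nat.gcd C₁ C₂ = 1) (hmod8 : C₁ * C₂ % 8 ≠ 7)
    (hcpos : 0 < c) (hdpos : 0 < d) (hcsqf : Squarefree c)
    (hfact : C₁ * C₂ = c * d ^ 2)
    (p : ℕ) (hp : p.Prime) (hpodd : Odd p)
    (hpcl : ¬ p ∣ classNumberK c)
    (hp3 : p = 3 → ¬ ∃ m : ℤ, (C₁ : ℤ) * (C₂ : ℤ) = 3 * m ^ 2)
    (x y : ℕ) (hxpos : 0 < x) (hypos : 0 < y)
    (heq : C₁ * x ^ 2 + C₂ = y ^ p)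
    (hgcd : Nat.gcd (Nat.gcd (C₁ * x ^ 2) C₂) (y ^ p) = 1)
    (δ : ℂ) (hδK : δ ∈ Kf c) (hδint : IsIntegral ℤ δ)
    (hδeq : (C₁ : ℂ) ^ ((p - 1) / 2) * ((C₁ : ℂ) * (x : ℂ) + (d : ℂ) * sqrtneg c) = δ ^ p)
    (α β : ℂ) (hα : α = δ / (Real.sqrt C₁ : ℂ))
    (hβ : β = (starRingEnd ℂ) δ / (Real.sqrt C₁ : ℂ))
    (q : ℕ) (hq : q.Prime) (hqodd : Odd q) (hqC₁ : q ∣ C₁)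
    (Q : Ideal (NumberField.RingOfIntegers (Lf c C₁)))
    (hQprime : Q.IsPrime) (hQ0 : Q ≠ ⊥)
    (hQq : (q : NumberField.RingOfIntegers (Lf c C₁)) ∈ Q)
    (A B : NumberField.RingOfIntegers (Lf c C₁))
    (hA : ((algebraMap (NumberField.RingOfIntegers (Lf c C₁)) (Lf c C₁) A : Lf c C₁) : ℂ) = α)
    (hB : ((algebraMap (NumberField.RingOfIntegers (Lf c C₁)) (Lf c C₁) B : Lf c C₁) : ℂ) = β)
    :
    A ^ p - B ^ p ∉ Q := by
  intro hmem
  -- the embedding of R into ℂ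
  let f : NumberField.RingOfIntegers (Lf c C₁) →+* ℂ := ((Lf c C₁).val.toRingHom).comp (algebraMap (NumberField.RingOfIntegers (Lf c C₁)) (Lf c C₁))
  have hfinj : Function.Injective f :=
    ((Lf c C₁).val.toRingHom.injective).comp (NumberField.RingOfIntegers.coe_injective)
  have hfA : f A = α := by
    simp only [f, RingHom.comp_apply, AlgHom.toRingHom_eq_coe, RingHom.coe_coe]
    exact hA
  have hfB : f B = β := by
    simp only [f, RingHom.comp_apply, AlgHom.toRingHom_eq_coe, RingHom.coe_coe]
    exact hB
  -- complex analytic computation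
  obtain ⟨k, hk⟩ := hpodd
  have hk2 : (p - 1) / 2 = k := by
    have := hp.two_le; omega
  have hC1ne : (C₁ : ℂ) ≠ 0 := Nat.cast_ne_zero.mpr hC₁pos.ne'
  have hC1kne : (C₁ : ℂ) ^ k ≠ 0 := pow_ne_zero _ hC1ne
  have hrp : (Real.sqrt C₁ : ℂ) ^ 2 = (C₁ : ℂ) := by
    rw [← Complex.ofReal_pow, Real.sq_sqrt (by positivity)]
    norm_num
  have hrne : (Real.sqrt C₁ : ℂ) ≠ 0 := by
    simp only [ne_eq, Complex.ofReal_eq_zero]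
    exact (Real.sqrt_ne_zero'.mpr (by exact_mod_cast hC₁pos))
  have hconjs : (starRingEnd ℂ) (sqrtneg c) = - sqrtneg c := by
    simp [sqrtneg, map_mul, Complex.conj_I]
  have hδp : δ ^ p = (C₁ : ℂ) ^ k * ((C₁ : ℂ) * x + d * sqrtneg c) := by
    rw [← hδeq, hk2]
  have hconjδ : (starRingEnd ℂ) δ ^ p = (C₁ : ℂ) ^ k * ((C₁ : ℂ) * x - d * sqrtneg c) := by
    rw [← map_pow, hδp]
    simp only [map_mul, map_add, map_pow, map_natCast, hconjs]
    ring
  have hrpp : (Real.sqrt C₁ : ℂ) ^ p = (C₁ : ℂ) ^ k * (Real.sqrt C₁ : ℂ) := by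
    rw [hk, pow_succ, pow_mul, hrp]
  have h1 : α ^ p - β ^ p = 2 * d * sqrtneg c / (Real.sqrt C₁ : ℂ) := by
    rw [hα, hβ, div_pow, div_pow, hδp, hconjδ, hrpp, div_sub_div_same]
    have h2 : (C₁ : ℂ) ^ k * ((C₁ : ℂ) * x + d * sqrtneg c)
        - (C₁ : ℂ) ^ k * ((C₁ : ℂ) * x - d * sqrtneg c)
        = (C₁ : ℂ) ^ k * (2 * d * sqrtneg c) := by ring
    rw [h2, mul_div_mul_left _ _ hC1kne]
  have hs2 := sqrtneg_sq c
  have hfc : (C₁ : ℂ) * C₂ = c * d ^ 2 := by exact_mod_cast congrArg (Nat.cast : ℕ → ℂ) hfact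
  have key : (α ^ p - β ^ p) ^ 2 = -(4 * C₂ : ℂ) := by
    rw [h1, div_pow, hrp, div_eq_iff hC1ne]
    linear_combination (4 * (d : ℂ) ^ 2) * hs2 + 4 * hfc
  -- transfer to R
  have hRkey : (A ^ p - B ^ p) ^ 2 = -(4 * (C₂ : NumberField.RingOfIntegers (Lf c C₁))) := by
    apply hfinj
    have e1 : f ((A ^ p - B ^ p) ^ 2) = (α ^ p - β ^ p) ^ 2 := by
      rw [f.map_pow, f.map_sub, f.map_pow, f.map_pow, hfA, hfB]
    have e3 : -(4 * (C₂ : NumberField.RingOfIntegers (Lf c C₁))) = -((4 * C₂ : ℕ) : NumberField.RingOfIntegers (Lf c C₁)) := by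
      push_cast; ring
    have e2 : f (-(4 * (C₂ : NumberField.RingOfIntegers (Lf c C₁)))) = -(4 * (C₂ : ℂ)) := by
      rw [e3, f.map_neg, map_natCast]
      push_cast; ring
    rw [e1, e2, key]
  -- 4*C₂ ∈ Q
  have hsq : (A ^ p - B ^ p) ^ 2 ∈ Q := by
    rw [sq]; exact Ideal.mul_mem_left Q _ hmem
  have h4C2 : (4 * (C₂ : NumberField.RingOfIntegers (Lf c C₁))) ∈ Q := by
    have := hsq
    rw [hRkey] at this
    simpa using Q.neg_mem this
  -- coprimality
  have hq2 : q ≠ 2 := by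
    rintro rfl; exact (by norm_num : ¬ Odd 2) hqodd
  have hq4 : Nat.Coprime q 4 := by
    rw [Nat.Prime.coprime_iff_not_dvd hq]
    intro hd
    have h2 : q ∣ 2 ^ 2 := by norm_num at hd ⊢; exact hd
    have := (Nat.prime_dvd_prime_iff_eq hq Nat.prime_two).mp (hq.dvd_of_dvd_pow h2)
    exact hq2 this
  have hqC2 : Nat.Coprime q C₂ := Nat.Coprime.coprime_dvd_left hqC₁ hcop
  have hcp : Nat.Coprime q (4 * C₂) := Nat.Coprime.mul_right hq4 hqC2
  have hicp : IsCoprime (q : ℤ) ((4 * C₂ : ℕ) : ℤ) := by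
    rw [Int.isCoprime_iff_gcd_eq_one]
    exact_mod_cast hcp
  obtain ⟨u, v, huv⟩ := hicp
  have hone : (1 : NumberField.RingOfIntegers (Lf c C₁)) ∈ Q := by
    have hcast : (1 : NumberField.RingOfIntegers (Lf c C₁))
        = (u : NumberField.RingOfIntegers (Lf c C₁)) * (q : NumberField.RingOfIntegers (Lf c C₁))
          + (v : NumberField.RingOfIntegers (Lf c C₁)) * (4 * (C₂ : NumberField.RingOfIntegers (Lf c C₁))) := by
      have h := congrArg (fun z : ℤ => (z : NumberField.RingOfIntegers (Lf c C₁))) huv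
      push_cast at h
      rw [← h]
    rw [hcast]
    exact Q.add_mem (Q.mul_mem_left _ hQq) (Q.mul_mem_left _ h4C2)
  exact hQprime.ne_top ((Ideal.eq_top_iff_one Q).mpr hone)
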